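/- For every τ in the complex upper half plane (Im τ > 0), one has the identity (Σ_{n∈ℤ} exp(πiτn²))⁴ = (Σ_{n∈ℤ} (−1)ⁿ exp(πiτn²))⁴ + (Σ_{n∈ℤ} exp(πiτ(n+1/2)²))⁴; that is, ϑ[0,0]⁴ = ϑ[0,1]⁴ + ϑ[1,0]⁴ as functions on the upper half plane. -/

import Mathlib

open Complex Real Function

noncomputable section JacobiAux

/-- term of ϑ₃ -/
def Jf (τ : ℂ) (n : ℤ) : ℂ := Complex.exp ((Real.pi : ℂ) * Complex.I * τ * (n : ℂ) ^ 2)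

/-- term of ϑ₄ -/
def Jg (τ : ℂ) (n : ℤ) : ℂ := (-1 : ℂ) ^ n * Jf τ n

/-- term of ϑ₂ -/
def Jh (τ : ℂ) (n : ℤ) : ℂ := Complex.exp ((Real.pi : ℂ) * Complex.I * τ * ((n : ℂ) + 1 / 2) ^ 2)

lemma Jf_eq (τ : ℂ) (n : ℤ) : Jf τ n = jacobiTheta₂_term n 0 τ := by
  simp only [Jf, jacobiTheta₂_term, mul_zero, zero_add]
  congr 1; ring

lemma Jh_eq (τ : ℂ) (n : ℤ) :
    Jh τ n = Complex.exp ((Real.pi : ℂ) * Complex.I * τ / 4) * jacobiTheta₂_term n (τ / 2) τ := by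
  simp only [Jh, jacobiTheta₂_term, ← Complex.exp_add]
  congr 1; ring

lemma summable_norm_Jf {τ : ℂ} (hτ : 0 < τ.im) : Summable fun n : ℤ => ‖Jf τ n‖ := by
  simp only [Jf_eq]
  exact (summable_norm_iff.mpr ((summable_jacobiTheta₂_term_iff 0 τ).mpr hτ))

lemma summable_norm_Jh {τ : ℂ} (hτ : 0 < τ.im) : Summable fun n : ℤ => ‖Jh τ n‖ := by
  simp only [Jh_eq, norm_mul]
  exact ((summable_norm_iff.mpr
    ((summable_jacobiTheta₂_term_iff (τ / 2) τ).mpr hτ)).mul_left _)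

lemma norm_Jg (τ : ℂ) (n : ℤ) : ‖Jg τ n‖ = ‖Jf τ n‖ := by
  simp [Jg, norm_zpow]

lemma summable_norm_Jg {τ : ℂ} (hτ : 0 < τ.im) : Summable fun n : ℤ => ‖Jg τ n‖ := by
  simp only [norm_Jg]; exact summable_norm_Jf hτ

lemma im_two_mul (τ : ℂ) : (2 * τ).im = 2 * τ.im := by simp

/-- sums -/
def T3 (τ : ℂ) : ℂ := ∑' n : ℤ, Jf τ n
def T4 (τ : ℂ) : ℂ := ∑' n : ℤ, Jg τ n
def T2 (τ : ℂ) : ℂ := ∑' n : ℤ, Jh τ n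

lemma Jf_mul (τ : ℂ) (u v : ℤ) :
    Jf τ (u + v) * Jf τ (u - v) = Jf (2 * τ) u * Jf (2 * τ) v := by
  simp only [Jf, ← Complex.exp_add]
  congr 1; push_cast; ring

lemma Jf_mul_odd (τ : ℂ) (u v : ℤ) :
    Jf τ (u + v + 1) * Jf τ (u - v) = Jh (2 * τ) u * Jh (2 * τ) v := by
  simp only [Jf, Jh, ← Complex.exp_add]
  congr 1; push_cast; ring

lemma Jh_mul_even (τ : ℂ) (u v : ℤ) :
    Jh τ (u + v) * Jh τ (u - v) = Jh (2 * τ) u * Jf (2 * τ) v := by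
  simp only [Jf, Jh, ← Complex.exp_add]
  congr 1; push_cast; ring

lemma Jh_mul_odd (τ : ℂ) (u v : ℤ) :
    Jh τ (u + v) * Jh τ (u - v - 1) = Jf (2 * τ) u * Jh (2 * τ) v := by
  simp only [Jf, Jh, ← Complex.exp_add]
  congr 1; push_cast; ring

/-- the even reindexing map -/
def g0 (p : ℤ × ℤ) : ℤ × ℤ := (p.1 + p.2, p.1 - p.2)
/-- odd reindexing maps -/
def g1 (p : ℤ × ℤ) : ℤ × ℤ := (p.1 + p.2 + 1, p.1 - p.2)
def g2 (p : ℤ × ℤ) : ℤ × ℤ := (p.1 + p.2, p.1 - p.2 - 1)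

lemma g0_inj : Injective g0 := by
  intro p q h
  simp only [g0, Prod.mk.injEq] at h
  ext <;> omega

lemma g1_inj : Injective g1 := by
  intro p q h
  simp only [g1, Prod.mk.injEq] at h
  ext <;> omega

lemma g2_inj : Injective g2 := by
  intro p q h
  simp only [g2, Prod.mk.injEq] at h
  ext <;> omega

lemma mem_range_g0 {x : ℤ × ℤ} (hx : Even (x.1 + x.2)) : x ∈ Set.range g0 := by
  obtain ⟨k, hk⟩ := hx
  exact ⟨(k, x.1 - k), by rw [Prod.ext_iff]; constructor <;> simp [g0] <;> omega⟩

lemma mem_range_g1 {x : ℤ × ℤ} (hx : Odd (x.1 + x.2)) : x ∈ Set.range g1 := by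
  obtain ⟨k, hk⟩ := hx
  exact ⟨(k, x.1 - k - 1), by rw [Prod.ext_iff]; constructor <;> simp [g1] <;> omega⟩

lemma mem_range_g2 {x : ℤ × ℤ} (hx : Odd (x.1 + x.2)) : x ∈ Set.range g2 := by
  obtain ⟨k, hk⟩ := hx
  exact ⟨(k + 1, x.1 - k - 1), by rw [Prod.ext_iff]; constructor <;> simp [g2] <;> omega⟩

lemma Jg_mul (τ : ℂ) (m n : ℤ) :
    Jg τ m * Jg τ n = (-1 : ℂ) ^ (m + n) * (Jf τ m * Jf τ n) := by
  simp only [Jg, zpow_add₀ (by norm_num : (-1 : ℂ) ≠ 0)]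
  ring

/-- Identity A: ϑ₃(τ)² + ϑ₄(τ)² = 2 ϑ₃(2τ)². -/
lemma identity_A {τ : ℂ} (hτ : 0 < τ.im) : T3 τ ^ 2 + T4 τ ^ 2 = 2 * T3 (2 * τ) ^ 2 := by
  have hτ2 : 0 < (2 * τ).im := by rw [im_two_mul]; linarith
  have hf := summable_norm_Jf hτ
  have hg := summable_norm_Jg hτ
  have hf2 := summable_norm_Jf hτ2
  have hsf : Summable fun p : ℤ × ℤ => Jf τ p.1 * Jf τ p.2 :=
    summable_mul_of_summable_norm hf hf
  have hsg : Summable fun p : ℤ × ℤ => Jg τ p.1 * Jg τ p.2 :=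
    summable_mul_of_summable_norm hg hg
  rw [T3, T4, T3, sq, sq, sq, tsum_mul_tsum_of_summable_norm hf hf,
    tsum_mul_tsum_of_summable_norm hg hg, tsum_mul_tsum_of_summable_norm hf2 hf2,
    ← Summable.tsum_add hsf hsg, ← tsum_mul_left]
  set F : ℤ × ℤ → ℂ := fun p => Jf τ p.1 * Jf τ p.2 + Jg τ p.1 * Jg τ p.2 with hF
  have hsupp : support F ⊆ Set.range g0 := by
    intro x hx
    by_contra hr
    apply hx
    have hodd : Odd (x.1 + x.2) := by
      rcases Int.even_or_odd (x.1 + x.2) with h | h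
      · exact absurd (mem_range_g0 h) hr
      · exact h
    simp only [hF, Jg_mul, hodd.neg_one_zpow]
    ring
  rw [← g0_inj.tsum_eq hsupp]
  refine tsum_congr fun p => ?_
  simp only [hF, g0, Jg_mul]
  have heven : Even ((p.1 + p.2) + (p.1 - p.2)) := ⟨p.1, by ring⟩
  rw [heven.neg_one_zpow, Jf_mul]
  ring

/-- Identity B: ϑ₃(τ)² - ϑ₄(τ)² = 2 ϑ₂(2τ)². -/
lemma identity_B {τ : ℂ} (hτ : 0 < τ.im) : T3 τ ^ 2 - T4 τ ^ 2 = 2 * T2 (2 * τ) ^ 2 := by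
  have hτ2 : 0 < (2 * τ).im := by rw [im_two_mul]; linarith
  have hf := summable_norm_Jf hτ
  have hg := summable_norm_Jg hτ
  have hh2 := summable_norm_Jh hτ2
  have hsf : Summable fun p : ℤ × ℤ => Jf τ p.1 * Jf τ p.2 :=
    summable_mul_of_summable_norm hf hf
  have hsg : Summable fun p : ℤ × ℤ => Jg τ p.1 * Jg τ p.2 :=
    summable_mul_of_summable_norm hg hg
  rw [T3, T4, T2, sq, sq, sq, tsum_mul_tsum_of_summable_norm hf hf,
    tsum_mul_tsum_of_summable_norm hg hg, tsum_mul_tsum_of_summable_norm hh2 hh2,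
    ← Summable.tsum_sub hsf hsg, ← tsum_mul_left]
  set F : ℤ × ℤ → ℂ := fun p => Jf τ p.1 * Jf τ p.2 - Jg τ p.1 * Jg τ p.2 with hF
  have hsupp : support F ⊆ Set.range g1 := by
    intro x hx
    by_contra hr
    apply hx
    have heven : Even (x.1 + x.2) := by
      rcases Int.even_or_odd (x.1 + x.2) with h | h
      · exact h
      · exact absurd (mem_range_g1 h) hr
    simp only [hF, Jg_mul, heven.neg_one_zpow]
    ring
  rw [← g1_inj.tsum_eq hsupp]
  refine tsum_congr fun p => ?_
  simp only [hF, g1, Jg_mul]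
  have hodd : Odd ((p.1 + p.2 + 1) + (p.1 - p.2)) := ⟨p.1, by ring⟩
  rw [hodd.neg_one_zpow, Jf_mul_odd]
  ring

/-- Identity C: ϑ₂(τ)² = 2 ϑ₂(2τ) ϑ₃(2τ). -/
lemma identity_C {τ : ℂ} (hτ : 0 < τ.im) : T2 τ ^ 2 = 2 * (T2 (2 * τ) * T3 (2 * τ)) := by
  have hτ2 : 0 < (2 * τ).im := by rw [im_two_mul]; linarith
  have hh := summable_norm_Jh hτ
  have hh2 := summable_norm_Jh hτ2
  have hf2 := summable_norm_Jf hτ2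
  rw [T2, T3, T2, sq, tsum_mul_tsum_of_summable_norm hh hh,
    tsum_mul_tsum_of_summable_norm hh2 hf2]
  set Fe : ℤ × ℤ → ℂ :=
    fun p => (1 + (-1 : ℂ) ^ (p.1 + p.2)) / 2 * (Jh τ p.1 * Jh τ p.2) with hFe
  set Fo : ℤ × ℤ → ℂ :=
    fun p => (1 - (-1 : ℂ) ^ (p.1 + p.2)) / 2 * (Jh τ p.1 * Jh τ p.2) with hFo
  have hsum : Summable fun p : ℤ × ℤ => ‖Jh τ p.1 * Jh τ p.2‖ := hh.mul_norm hh
  have hbnde : ∀ p : ℤ × ℤ, ‖Fe p‖ ≤ ‖Jh τ p.1 * Jh τ p.2‖ := by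
    intro p
    rw [hFe]
    simp only [norm_mul]
    rcases Int.even_or_odd (p.1 + p.2) with h | h
    · rw [h.neg_one_zpow]; norm_num; all_goals positivity
    · rw [h.neg_one_zpow]; norm_num; all_goals positivity
  have hbndo : ∀ p : ℤ × ℤ, ‖Fo p‖ ≤ ‖Jh τ p.1 * Jh τ p.2‖ := by
    intro p
    rw [hFo]
    simp only [norm_mul]
    rcases Int.even_or_odd (p.1 + p.2) with h | h
    · rw [h.neg_one_zpow]; norm_num; all_goals positivity
    · rw [h.neg_one_zpow]; norm_num; all_goals positivity
  have hse : Summable Fe := Summable.of_norm_bounded hsum hbnde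
  have hso : Summable Fo := Summable.of_norm_bounded hsum hbndo
  have hsplit : (fun p : ℤ × ℤ => Jh τ p.1 * Jh τ p.2) = fun p => Fe p + Fo p := by
    funext p; rw [hFe, hFo]; ring
  rw [hsplit, Summable.tsum_add hse hso]
  have hsuppe : support Fe ⊆ Set.range g0 := by
    intro x hx
    by_contra hr
    apply hx
    have hodd : Odd (x.1 + x.2) := by
      rcases Int.even_or_odd (x.1 + x.2) with h | h
      · exact absurd (mem_range_g0 h) hr
      · exact h
    simp only [hFe, hodd.neg_one_zpow]
    ring
  have hsuppo : support Fo ⊆ Set.range g2 := by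
    intro x hx
    by_contra hr
    apply hx
    have heven : Even (x.1 + x.2) := by
      rcases Int.even_or_odd (x.1 + x.2) with h | h
      · exact h
      · exact absurd (mem_range_g2 h) hr
    simp only [hFo, heven.neg_one_zpow]
    ring
  rw [← g0_inj.tsum_eq hsuppe, ← g2_inj.tsum_eq hsuppo]
  have he : ∀ p : ℤ × ℤ, Fe (g0 p) = Jh (2 * τ) p.1 * Jf (2 * τ) p.2 := by
    intro p
    have heven : Even ((p.1 + p.2) + (p.1 - p.2)) := ⟨p.1, by ring⟩
    simp only [hFe, g0, heven.neg_one_zpow, Jh_mul_even]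
    ring
  have ho : ∀ p : ℤ × ℤ, Fo (g2 p) = Jf (2 * τ) p.1 * Jh (2 * τ) p.2 := by
    intro p
    have hodd : Odd ((p.1 + p.2) + (p.1 - p.2 - 1)) := ⟨p.1 - 1, by ring⟩
    simp only [hFo, g2, hodd.neg_one_zpow, Jh_mul_odd]
    ring
  rw [tsum_congr he, tsum_congr ho]
  rw [← tsum_mul_tsum_of_summable_norm hh2 hf2, ← tsum_mul_tsum_of_summable_norm hf2 hh2]
  ring

end JacobiAux

open Complex

/-- Jacobi's identity `ϑ[0,0]⁴ = ϑ[0,1]⁴ + ϑ[1,0]⁴` on the upper half plane. -/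
theorem jacobi_quartic_identity (τ : ℂ) (hτ : 0 < τ.im) :
    (∑' n : ℤ, Complex.exp ((Real.pi : ℂ) * Complex.I * τ * (n : ℂ) ^ 2)) ^ 4 =
      (∑' n : ℤ, (-1 : ℂ) ^ n * Complex.exp ((Real.pi : ℂ) * Complex.I * τ * (n : ℂ) ^ 2)) ^ 4 +
      (∑' n : ℤ, Complex.exp ((Real.pi : ℂ) * Complex.I * τ * ((n : ℂ) + 1 / 2) ^ 2)) ^ 4 := by
  have hA := identity_A hτ
  have hB := identity_B hτ
  have hC := identity_C hτ
  have h3 : (∑' n : ℤ, Complex.exp ((Real.pi : ℂ) * Complex.I * τ * (n : ℂ) ^ 2)) = T3 τ := rfl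
  have h4 : (∑' n : ℤ, (-1 : ℂ) ^ n *
      Complex.exp ((Real.pi : ℂ) * Complex.I * τ * (n : ℂ) ^ 2)) = T4 τ := rfl
  have h2 : (∑' n : ℤ,
      Complex.exp ((Real.pi : ℂ) * Complex.I * τ * ((n : ℂ) + 1 / 2) ^ 2)) = T2 τ := rfl
  rw [h3, h4, h2]
  linear_combination (T3 τ ^ 2 - T4 τ ^ 2) * hA + 2 * T3 (2 * τ) ^ 2 * hB -
    (T2 τ ^ 2 + 2 * (T2 (2 * τ) * T3 (2 * τ))) * hC
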